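/- Define R : ℝ² → ℝ by R(y,z) = ∫₀^z 3(s−z)(s+y)(1+(y+s)²)^{−5/2} ds. Then there exists a constant C > 0 such that for all y, z ∈ ℝ: |∂_z² R(y,z)| ≤ C, |∂_y² R(y,z)| ≤ Cz², |∂_z∂_y R(y,z)| ≤ C|z|, |∂_z³ R(y,z)| ≤ C, and |∂_z²∂_y R(y,z)| ≤ C, where ∂_z denotes differentiation of R in its second argument and ∂_y differentiation in its first argument (the mixed derivatives being iterated partial derivatives). -/

import Mathlib

open MeasureTheory

/-- The Taylor remainder function
`R(y,z) = ∫₀^z 3(s-z)(s+y)(1+(y+s)²)^{-5/2} ds`. -/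
noncomputable def Rfun (y z : ℝ) : ℝ :=
  ∫ s in (0 : ℝ)..z, 3 * (s - z) * (s + y) * (1 + (y + s) ^ 2) ^ (-(5 : ℝ) / 2)

/-- `Q(y,z) = ∫₀^z R(y,r) dr`. -/
noncomputable def Qfun (y z : ℝ) : ℝ :=
  ∫ t in (0 : ℝ)..z, Rfun y t

namespace S14
noncomputable def f0 (u : ℝ) : ℝ := u * (1+u^2) ^ (-(1:ℝ)/2)
noncomputable def f1 (u : ℝ) : ℝ := (1+u^2) ^ (-(3:ℝ)/2)
noncomputable def f2 (u : ℝ) : ℝ := -3*u*(1+u^2) ^ (-(5:ℝ)/2)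
noncomputable def f3 (u : ℝ) : ℝ := -3*(1+u^2)^(-(5:ℝ)/2) + 15*u^2*(1+u^2)^(-(7:ℝ)/2)
noncomputable def f4 (u : ℝ) : ℝ := 45*u*(1+u^2)^(-(7:ℝ)/2) - 105*u^3*(1+u^2)^(-(9:ℝ)/2)

lemma hA (u : ℝ) : (0:ℝ) < 1 + u^2 := by positivity

lemma hA' (u : ℝ) : HasDerivAt (fun u : ℝ => 1 + u^2) (2*u) u := by
  simpa using ((hasDerivAt_pow 2 u).const_add 1)

lemma split (u a : ℝ) : (1+u^2)^(a+1) = (1+u^2)^a * (1+u^2) := by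
  rw [Real.rpow_add (hA u), Real.rpow_one]

lemma hd0 (u : ℝ) : HasDerivAt f0 (f1 u) u := by
  have h : HasDerivAt f0 _ u := (hasDerivAt_id u).mul ((hA' u).rpow_const (p := -(1:ℝ)/2) (Or.inl (hA u).ne'))
  convert h using 1
  have e1 : (-(1:ℝ)/2) = (-(3:ℝ)/2) + 1 := by norm_num
  have e2 : (-(1:ℝ)/2 - 1) = (-(3:ℝ)/2) := by norm_num
  rw [e2, e1, split]
  unfold f1
  simp only [id_eq]
  ring

lemma hd1 (u : ℝ) : HasDerivAt f1 (f2 u) u := by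
  have h : HasDerivAt f1 _ u := (hA' u).rpow_const (p := -(3:ℝ)/2) (Or.inl (hA u).ne')
  convert h using 1
  have e2 : (-(3:ℝ)/2 - 1) = (-(5:ℝ)/2) := by norm_num
  rw [e2]; unfold f2; ring

lemma hd2 (u : ℝ) : HasDerivAt f2 (f3 u) u := by
  have h : HasDerivAt f2 _ u := (((hasDerivAt_id u).const_mul (-3:ℝ)).mul ((hA' u).rpow_const (p := -(5:ℝ)/2) (Or.inl (hA u).ne')))
  convert h using 1
  have e2 : (-(5:ℝ)/2 - 1) = (-(7:ℝ)/2) := by norm_num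
  rw [e2]; unfold f3; simp only [id_eq]; ring

lemma hd3 (u : ℝ) : HasDerivAt f3 (f4 u) u := by
  have h1 := ((hA' u).rpow_const (p := -(5:ℝ)/2) (Or.inl (hA u).ne')).const_mul (-3:ℝ)
  have h2 := (((hasDerivAt_pow 2 u).const_mul (15:ℝ)).mul ((hA' u).rpow_const (p := -(7:ℝ)/2) (Or.inl (hA u).ne')))
  have h : HasDerivAt f3 _ u := h1.add h2
  convert h using 1
  have e2 : (-(5:ℝ)/2 - 1) = (-(7:ℝ)/2) := by norm_num
  have e3 : (-(7:ℝ)/2 - 1) = (-(9:ℝ)/2) := by norm_num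
  rw [e2, e3]; unfold f4; ring

-- shifted versions
lemma hd0l (y s : ℝ) : HasDerivAt (fun s => f0 (y+s)) (f1 (y+s)) s := by
  simpa using (show HasDerivAt (fun s => f0 (y+s)) _ s from (hd0 (y+s)).comp s ((hasDerivAt_id s).const_add y))
lemma hd1l (y s : ℝ) : HasDerivAt (fun s => f1 (y+s)) (f2 (y+s)) s := by
  simpa using (show HasDerivAt (fun s => f1 (y+s)) _ s from (hd1 (y+s)).comp s ((hasDerivAt_id s).const_add y))
lemma hd2l (y s : ℝ) : HasDerivAt (fun s => f2 (y+s)) (f3 (y+s)) s := by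
  simpa using (show HasDerivAt (fun s => f2 (y+s)) _ s from (hd2 (y+s)).comp s ((hasDerivAt_id s).const_add y))
lemma hd0r (z v : ℝ) : HasDerivAt (fun v => f0 (v+z)) (f1 (v+z)) v := by
  exact HasDerivAt.comp_add_const v z (hd0 (v+z))
lemma hd1r (z v : ℝ) : HasDerivAt (fun v => f1 (v+z)) (f2 (v+z)) v := by
  exact HasDerivAt.comp_add_const v z (hd1 (v+z))

lemma Rfun_eq (y z : ℝ) : Rfun y z = f0 (y+z) - f0 y - z * f1 y := by
  have hF : ∀ s : ℝ, HasDerivAt (fun s => (s - z) * (-(f1 (y+s))) + f0 (y+s))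
      (3 * (s - z) * (s + y) * (1 + (y + s) ^ 2) ^ (-(5 : ℝ) / 2)) s := by
    intro s
    have h : HasDerivAt (fun s => (s - z) * (-(f1 (y+s))) + f0 (y+s)) _ s := (((hasDerivAt_id s).sub_const z).mul (hd1l y s).neg).add (hd0l y s)
    convert h using 1
    simp only [id_eq, f1, f2, Pi.neg_apply]
    ring
  have hcont : Continuous fun s : ℝ => 3 * (s - z) * (s + y) * (1 + (y + s) ^ 2) ^ (-(5 : ℝ) / 2) := by
    apply Continuous.mul
    · fun_prop
    · exact (Continuous.rpow_const (by fun_prop) (fun x => Or.inl (hA _).ne'))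
  have := intervalIntegral.integral_eq_sub_of_hasDerivAt (f := fun s => (s - z) * (-(f1 (y+s))) + f0 (y+s))
    (fun t _ => hF t) (hcont.intervalIntegrable 0 z)
  rw [Rfun, this]
  ring

lemma dz (y z : ℝ) : deriv (fun v => Rfun y v) z = f1 (y+z) - f1 y := by
  have he : (fun v => Rfun y v) = fun v => f0 (y+v) - f0 y - v * f1 y :=
    funext fun v => Rfun_eq y v
  rw [he]
  have h : HasDerivAt (fun v => f0 (y+v) - f0 y - v * f1 y) _ z := (((hd0l y z).sub_const (f0 y)).sub ((hasDerivAt_id z).mul_const (f1 y)))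
  simpa using h.deriv

lemma dzz (y z : ℝ) : deriv (fun w => deriv (fun v => Rfun y v) w) z = f2 (y+z) := by
  have he : (fun w => deriv (fun v => Rfun y v) w) = fun w => f1 (y+w) - f1 y :=
    funext fun w => dz y w
  rw [he]
  simpa using ((hd1l y z).sub_const (f1 y)).deriv

lemma dzzz (y z : ℝ) : deriv (fun w => deriv (fun w' => deriv (fun v => Rfun y v) w') w) z = f3 (y+z) := by
  have he : (fun w => deriv (fun w' => deriv (fun v => Rfun y v) w') w) = fun w => f2 (y+w) :=
    funext fun w => dzz y w
  rw [he]
  exact (hd2l y z).deriv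

lemma dy (y z : ℝ) : deriv (fun v => Rfun v z) y = f1 (y+z) - f1 y - z * f2 y := by
  have he : (fun v => Rfun v z) = fun v => f0 (v+z) - f0 v - z * f1 v :=
    funext fun v => Rfun_eq v z
  rw [he]
  exact (((hd0r z y).sub (hd0 y)).sub ((hd1 y).const_mul z)).deriv

lemma dyy (y z : ℝ) : deriv (fun w => deriv (fun v => Rfun v z) w) y = f2 (y+z) - f2 y - z * f3 y := by
  have he : (fun w => deriv (fun v => Rfun v z) w) = fun w => f1 (w+z) - f1 w - z * f2 w :=
    funext fun w => dy w z
  rw [he]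
  exact (((hd1r z y).sub (hd1 y)).sub ((hd2 y).const_mul z)).deriv

lemma dydz (y z : ℝ) : deriv (fun w => deriv (fun v => Rfun v w) y) z = f2 (y+z) - f2 y := by
  have he : (fun w => deriv (fun v => Rfun v w) y) = fun w => f1 (y+w) - f1 y - w * f2 y :=
    funext fun w => dy y w
  rw [he]
  have h : HasDerivAt (fun w => f1 (y+w) - f1 y - w * f2 y) _ z := (((hd1l y z).sub_const (f1 y)).sub ((hasDerivAt_id z).mul_const (f2 y)))
  simpa using h.deriv

lemma dydzz (y z : ℝ) :
    deriv (fun w => deriv (fun w' => deriv (fun v => Rfun v w') y) w) z = f3 (y+z) := by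
  have he : (fun w => deriv (fun w' => deriv (fun v => Rfun v w') y) w) = fun w => f2 (y+w) - f2 y :=
    funext fun w => dydz y w
  rw [he]
  simpa using ((hd2l y z).sub_const (f2 y)).deriv

-- bounds
lemma hle1 (u c : ℝ) (hc : c ≤ 0) : (1+u^2)^c ≤ 1 :=
  Real.rpow_le_one_of_one_le_of_nonpos (by nlinarith [sq_nonneg u]) hc

lemma habs (u : ℝ) : |u| ≤ (1+u^2)^((1:ℝ)/2) := by
  rw [← Real.sqrt_eq_rpow]
  calc |u| = Real.sqrt (u^2) := (Real.sqrt_sq_eq_abs u).symm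
  _ ≤ Real.sqrt (1+u^2) := Real.sqrt_le_sqrt (by nlinarith)

lemma key1 (u : ℝ) : |u| * (1+u^2)^(-(5:ℝ)/2) ≤ 1 := by
  have h := mul_le_mul_of_nonneg_right (habs u) (Real.rpow_nonneg (hA u).le (-(5:ℝ)/2))
  rw [← Real.rpow_add (hA u)] at h
  calc |u| * (1+u^2)^(-(5:ℝ)/2) ≤ (1+u^2)^((1:ℝ)/2 + -(5:ℝ)/2) := h
  _ ≤ 1 := hle1 u _ (by norm_num)

lemma key2 (u : ℝ) : u^2 * (1+u^2)^(-(7:ℝ)/2) ≤ 1 := by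
  have h2 : u^2 ≤ (1+u^2)^((1:ℝ)) := by rw [Real.rpow_one]; nlinarith
  have h := mul_le_mul_of_nonneg_right h2 (Real.rpow_nonneg (hA u).le (-(7:ℝ)/2))
  rw [← Real.rpow_add (hA u)] at h
  calc u^2 * (1+u^2)^(-(7:ℝ)/2) ≤ (1+u^2)^((1:ℝ) + -(7:ℝ)/2) := h
  _ ≤ 1 := hle1 u _ (by norm_num)

lemma key1' (u : ℝ) : |u| * (1+u^2)^(-(7:ℝ)/2) ≤ 1 := by
  have h := mul_le_mul_of_nonneg_right (habs u) (Real.rpow_nonneg (hA u).le (-(7:ℝ)/2))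
  rw [← Real.rpow_add (hA u)] at h
  calc |u| * (1+u^2)^(-(7:ℝ)/2) ≤ (1+u^2)^((1:ℝ)/2 + -(7:ℝ)/2) := h
  _ ≤ 1 := hle1 u _ (by norm_num)

lemma key3 (u : ℝ) : |u|^3 * (1+u^2)^(-(9:ℝ)/2) ≤ 1 := by
  have h3 : |u|^3 ≤ ((1+u^2)^((1:ℝ)/2))^3 := pow_le_pow_left₀ (abs_nonneg u) (habs u) 3
  rw [← Real.rpow_natCast ((1+u^2)^((1:ℝ)/2)) 3, ← Real.rpow_mul (hA u).le] at h3
  have h := mul_le_mul_of_nonneg_right h3 (Real.rpow_nonneg (hA u).le (-(9:ℝ)/2))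
  rw [← Real.rpow_add (hA u)] at h
  calc |u|^3 * (1+u^2)^(-(9:ℝ)/2) ≤ (1+u^2)^((1:ℝ)/2 * (3:ℕ) + -(9:ℝ)/2) := h
  _ ≤ 1 := hle1 u _ (by push_cast; norm_num)

lemma b2 (u : ℝ) : |f2 u| ≤ 3 := by
  have h := key1 u
  have hnn := Real.rpow_nonneg (hA u).le (-(5:ℝ)/2)
  calc |f2 u| = 3 * (|u| * (1+u^2)^(-(5:ℝ)/2)) := by
        rw [f2, abs_mul, abs_mul]
        rw [abs_of_nonneg hnn]
        norm_num; ring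
  _ ≤ 3 * 1 := by linarith
  _ = 3 := by norm_num

lemma b3 (u : ℝ) : |f3 u| ≤ 18 := by
  have h1 := hle1 u (-(5:ℝ)/2) (by norm_num)
  have h2 := key2 u
  have hnn1 := Real.rpow_nonneg (hA u).le (-(5:ℝ)/2)
  have hnn2 := Real.rpow_nonneg (hA u).le (-(7:ℝ)/2)
  have hu2 : (0:ℝ) ≤ u^2 := sq_nonneg u
  rw [f3, abs_le]
  constructor <;> nlinarith [mul_nonneg hu2 hnn2]

lemma b4 (u : ℝ) : |f4 u| ≤ 150 := by
  have h1 := key1' u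
  have h3 := key3 u
  have hnn1 := Real.rpow_nonneg (hA u).le (-(7:ℝ)/2)
  have hnn2 := Real.rpow_nonneg (hA u).le (-(9:ℝ)/2)
  have e1 : |45*u*(1+u^2)^(-(7:ℝ)/2)| ≤ 45 := by
    rw [abs_mul, abs_mul]
    rw [abs_of_nonneg hnn1]
    have : |(45:ℝ)| = 45 := by norm_num
    rw [this, mul_assoc]
    nlinarith
  have e2 : |105*u^3*(1+u^2)^(-(9:ℝ)/2)| ≤ 105 := by
    rw [abs_mul, abs_mul, abs_of_nonneg hnn2, abs_pow]
    have : |(105:ℝ)| = 105 := by norm_num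
    rw [this, mul_assoc]
    nlinarith
  calc |f4 u| ≤ |45*u*(1+u^2)^(-(7:ℝ)/2)| + |105*u^3*(1+u^2)^(-(9:ℝ)/2)| := abs_sub _ _
  _ ≤ 150 := by linarith

lemma lip {f f' : ℝ → ℝ} (hf : ∀ x, HasDerivAt f (f' x) x) {C : ℝ}
    (hC : ∀ x, |f' x| ≤ C) (a b : ℝ) : |f b - f a| ≤ C * |b - a| := by
  have := Convex.norm_image_sub_le_of_norm_hasDerivWithin_le (f := f) (f' := f') (s := Set.univ)
    (fun x _ => (hf x).hasDerivWithinAt) (fun x _ => hC x) convex_univ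
    (Set.mem_univ a) (Set.mem_univ b)
  simpa [Real.norm_eq_abs] using this

lemma lipf2 (a b : ℝ) : |f2 b - f2 a| ≤ 18 * |b - a| := lip hd2 b3 a b
lemma lipf3 (a b : ℝ) : |f3 b - f3 a| ≤ 150 * |b - a| := lip hd3 b4 a b

lemma taylor2 (y z : ℝ) : |f2 (y+z) - f2 y - z * f3 y| ≤ 150 * z^2 := by
  have hd : ∀ t : ℝ, HasDerivAt (fun t => f2 (y+t) - t * f3 y) (f3 (y+t) - f3 y) t := by
    intro t
    simpa using (show HasDerivAt (fun t => f2 (y+t) - t * f3 y) _ t from ((hd2l y t).sub ((hasDerivAt_id t).mul_const (f3 y))))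
  have hb : ∀ t ∈ Set.uIcc (0:ℝ) z, ‖f3 (y+t) - f3 y‖ ≤ 150 * |z| := by
    intro t ht
    have h1 : |f3 (y+t) - f3 y| ≤ 150 * |t| := by
      simpa using lipf3 y (y+t)
    have h2 : |t| ≤ |z| := by
      have hz1 := le_abs_self z
      have hz2 := neg_abs_le z
      have hz3 := abs_nonneg z
      rcases Set.mem_uIcc.mp ht with ⟨ha, hb⟩ | ⟨ha, hb⟩ <;>
        rw [abs_le] <;> exact ⟨by linarith, by linarith⟩
    calc ‖f3 (y+t) - f3 y‖ = |f3 (y+t) - f3 y| := rfl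
    _ ≤ 150 * |t| := h1
    _ ≤ 150 * |z| := by linarith
  have h := Convex.norm_image_sub_le_of_norm_hasDerivWithin_le
    (f := fun t => f2 (y+t) - t * f3 y) (f' := fun t => f3 (y+t) - f3 y)
    (fun t _ => (hd t).hasDerivWithinAt) hb (convex_uIcc 0 z)
    (Set.left_mem_uIcc) (Set.right_mem_uIcc)
  have e1 : (f2 (y+z) - z * f3 y) - (f2 (y+0) - 0 * f3 y) = f2 (y+z) - f2 y - z * f3 y := by
    rw [add_zero]; ring
  rw [Real.norm_eq_abs, Real.norm_eq_abs, e1, sub_zero] at h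
  calc |f2 (y+z) - f2 y - z * f3 y| ≤ 150 * |z| * |z| := h
  _ = 150 * z^2 := by rw [mul_assoc, abs_mul_abs_self, sq]

end S14

/-- Uniform bounds on the higher partial derivatives of `R`:
`|∂_z² R| ≤ C`, `|∂_y² R| ≤ Cz²`, `|∂_z∂_y R| ≤ C|z|`, `|∂_z³ R| ≤ C`,
`|∂_z²∂_y R| ≤ C`. -/
theorem stmt14 : ∃ C : ℝ, 0 < C ∧ ∀ y z : ℝ,
    |deriv (fun w => deriv (fun v => Rfun y v) w) z| ≤ C ∧
    |deriv (fun w => deriv (fun v => Rfun v z) w) y| ≤ C * z ^ 2 ∧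
    |deriv (fun w => deriv (fun v => Rfun v w) y) z| ≤ C * |z| ∧
    |deriv (fun w => deriv (fun w' => deriv (fun v => Rfun y v) w') w) z| ≤ C ∧
    |deriv (fun w => deriv (fun w' => deriv (fun v => Rfun v w') y) w) z| ≤ C := by
  refine ⟨150, by norm_num, fun y z => ?_⟩
  refine ⟨?_, ?_, ?_, ?_, ?_⟩
  · rw [S14.dzz]
    linarith [S14.b2 (y+z)]
  · rw [S14.dyy]
    exact S14.taylor2 y z
  · rw [S14.dydz]
    have h := S14.lipf2 y (y+z)
    have hz := abs_nonneg z
    simp only [add_sub_cancel_left] at h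
    linarith
  · rw [S14.dzzz]
    linarith [S14.b3 (y+z)]
  · rw [S14.dydzz]
    linarith [S14.b3 (y+z)]
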